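/- arXiv:2112.08080 — 2 statements merged into one kernel-verified Lean document; each statement's English description precedes it below -/
import Mathlib

section
/- Let F : R^n ⇉ R^n and let (x̄, ȳ) ∈ gph F. Suppose F is SCD semismooth* at (x̄, ȳ): for every ε > 0 there is δ > 0 such that |⟨x*, x−x̄⟩ − ⟨y*, y−ȳ⟩| ≤ ε‖(x,y)−(x̄,ȳ)‖‖(x*,y*)‖ for all (x,y) ∈ gph F within distance δ of (x̄,ȳ) and all (y*,x*) in any L ∈ S*F(x,y). Then for every ε > 0 there is δ > 0 such that ‖x − C_Lᵀ(y − ȳ) − x̄‖ ≤ ε √(n(1+‖C_L‖²)) ‖(x,y)−(x̄,ȳ)‖ for every (x,y) ∈ gph F within distance δ of (x̄,ȳ) and every regular L ∈ S*F(x,y), where C_L is the unique matrix with L = rge(C_L, I). -/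
noncomputable section

abbrev Evec (n : ℕ) := EuclideanSpace ℝ (Fin n)
abbrev Vec2 (n : ℕ) := WithLp 2 (Evec n × Evec n)
def pairMk {n : ℕ} (u v : Evec n) : Vec2 n := (WithLp.equiv 2 (Evec n × Evec n)).symm (u, v)

/-- Let `F : ℝ^n ⇉ ℝ^n`, `(x̄, ȳ) ∈ gph F`, and let `SS x y` denote the
collection `S*F(x,y)` of `n`-dimensional subspaces of `ℝ^{2n}`. If `F` is SCD semismooth* at
`(x̄, ȳ)` (the ε-δ inequality holds for all `(y*,x*)` in any `L ∈ S*F(x,y)` with `(x,y)` in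
`gph F` near `(x̄,ȳ)`), then for every `ε > 0` there is `δ > 0` such that
`‖x − C_Lᵀ(y − ȳ) − x̄‖ ≤ ε √(n(1+‖C_L‖²)) ‖(x,y)−(x̄,ȳ)‖` for every `(x,y) ∈ gph F` within
`δ` of `(x̄,ȳ)` and every regular `L ∈ S*F(x,y)`, `C_L` being the unique matrix with
`L = rge(C_L, I)`. -/
theorem stmt15 (n : ℕ) (F : Evec n → Set (Evec n))
    (SS : Evec n → Evec n → Set (Submodule ℝ (Vec2 n)))
    (hdimSS : ∀ x y, y ∈ F x → ∀ L ∈ SS x y, Module.finrank ℝ L = n)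
    (xbar ybar : Evec n) (hbar : ybar ∈ F xbar)
    (hss : ∀ ε > (0 : ℝ), ∃ δ > (0 : ℝ), ∀ x y, y ∈ F x →
      ‖pairMk (x - xbar) (y - ybar)‖ ≤ δ → ∀ L ∈ SS x y,
        ∀ ystar xstar : Evec n, pairMk ystar xstar ∈ L →
          |(inner ℝ xstar (x - xbar) : ℝ) - (inner ℝ ystar (y - ybar) : ℝ)| ≤
            ε * ‖pairMk (x - xbar) (y - ybar)‖ * ‖pairMk xstar ystar‖) :
    ∀ ε > (0 : ℝ), ∃ δ > (0 : ℝ), ∀ x y, y ∈ F x →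
      ‖pairMk (x - xbar) (y - ybar)‖ ≤ δ → ∀ L ∈ SS x y,
        (∀ ystar : Evec n, pairMk ystar 0 ∈ L → ystar = 0) →
        ∀ C : Matrix (Fin n) (Fin n) ℝ,
          (L : Set (Vec2 n)) = {z | ∃ v : Evec n, z = pairMk (WithLp.toLp 2 (C.mulVec v)) v} →
          ‖x - (show Evec n from WithLp.toLp 2 (C.transpose.mulVec (y - ybar))) - xbar‖ ≤
            ε * Real.sqrt (n * (1 + ‖Matrix.toEuclideanCLM (𝕜 := ℝ) C‖ ^ 2)) *
              ‖pairMk (x - xbar) (y - ybar)‖ := by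
  intro ε hε
  obtain ⟨δ, hδ, H⟩ := hss ε hε
  refine ⟨δ, hδ, ?_⟩
  intro x y hy hnear L hL hreg C hC
  set K : ℝ := ‖Matrix.toEuclideanCLM (𝕜 := ℝ) C‖ with hK
  have hK0 : 0 ≤ K := norm_nonneg _
  set D : ℝ := ‖pairMk (x - xbar) (y - ybar)‖ with hD
  have hD0 : 0 ≤ D := norm_nonneg _
  set w : Evec n := x - (show Evec n from WithLp.toLp 2 (C.transpose.mulVec (y - ybar))) - xbar with hw
  have pair_norm_sq : ∀ u v : Evec n, ‖pairMk u v‖ ^ 2 = ‖u‖ ^ 2 + ‖v‖ ^ 2 := by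
    intro u v
    rw [pairMk, WithLp.prod_norm_sq_eq_of_L2]
    rfl
  have key : ∀ i : Fin n, |w i| ≤ ε * D * Real.sqrt (1 + K ^ 2) := by
    intro i
    set v : Evec n := EuclideanSpace.single i (1 : ℝ) with hv
    have hmem : pairMk (show Evec n from WithLp.toLp 2 (C.mulVec v)) v ∈ L := by
      have : (pairMk (show Evec n from WithLp.toLp 2 (C.mulVec v)) v : Vec2 n) ∈ (L : Set (Vec2 n)) := by
        rw [hC]; exact ⟨v, rfl⟩
      exact this
    have h1 := H x y hy hnear L hL (show Evec n from WithLp.toLp 2 (C.mulVec v)) v hmem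
    -- compute the inner products
    have e1 : (inner ℝ v (x - xbar) : ℝ) = (x - xbar) i := by
      simp [hv, EuclideanSpace.inner_single_left]
    have e2 : (inner ℝ (show Evec n from WithLp.toLp 2 (C.mulVec v)) (y - ybar) : ℝ)
        = C.transpose.mulVec ((y - ybar : Evec n) : Fin n → ℝ) i := by
      have h : (show Evec n from WithLp.toLp 2 (C.mulVec v)) = (show Evec n from WithLp.toLp 2 (fun j => C j i)) := by
        ext j
        show C.mulVec (Pi.single i (1:ℝ)) j = C j i
        simp [Matrix.mulVec_single]
      rw [h]
      simp [PiLp.inner_apply, Matrix.mulVec, dotProduct, Matrix.transpose_apply, mul_comm]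
    have ew : (inner ℝ v (x - xbar) : ℝ) - (inner ℝ (show Evec n from WithLp.toLp 2 (C.mulVec v)) (y - ybar) : ℝ)
        = w i := by
      rw [e1, e2, hw]
      show (x - xbar) i - _ = (x - (show Evec n from WithLp.toLp 2 (C.transpose.mulVec (y - ybar))) - xbar) i
      simp [PiLp.sub_apply]
      ring
    rw [ew] at h1
    -- bound the norm of the pair
    have hCv : ‖(show Evec n from WithLp.toLp 2 (C.mulVec v))‖ ≤ K := by
      have := (Matrix.toEuclideanCLM (𝕜 := ℝ) C).le_opNorm v
      have hv1 : ‖v‖ = 1 := by simp [hv]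
      rw [hv1, mul_one] at this
      exact this
    have hv1 : ‖v‖ = 1 := by simp [hv]
    have hpair : ‖pairMk v (show Evec n from WithLp.toLp 2 (C.mulVec v))‖ ≤ Real.sqrt (1 + K ^ 2) := by
      have h2 : ‖pairMk v (show Evec n from WithLp.toLp 2 (C.mulVec v))‖ ^ 2 ≤ 1 + K ^ 2 := by
        rw [pair_norm_sq, hv1]
        have : ‖(show Evec n from WithLp.toLp 2 (C.mulVec v))‖ ^ 2 ≤ K ^ 2 := by
          exact pow_le_pow_left₀ (norm_nonneg _) hCv 2
        nlinarith
      have := Real.sqrt_le_sqrt h2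
      calc ‖pairMk v (show Evec n from WithLp.toLp 2 (C.mulVec v))‖
          = Real.sqrt (‖pairMk v (show Evec n from WithLp.toLp 2 (C.mulVec v))‖ ^ 2) := by
            rw [Real.sqrt_sq (norm_nonneg _)]
        _ ≤ Real.sqrt (1 + K ^ 2) := Real.sqrt_le_sqrt h2
    calc |w i| ≤ ε * D * ‖pairMk v (show Evec n from WithLp.toLp 2 (C.mulVec v))‖ := h1
      _ ≤ ε * D * Real.sqrt (1 + K ^ 2) := by
          apply mul_le_mul_of_nonneg_left hpair
          positivity
  -- combine coordinates
  have hnormw : ‖w‖ ≤ Real.sqrt n * (ε * D * Real.sqrt (1 + K ^ 2)) := by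
    have h1 : ‖w‖ ^ 2 ≤ n * (ε * D * Real.sqrt (1 + K ^ 2)) ^ 2 := by
      have := EuclideanSpace.norm_eq w
      rw [this, Real.sq_sqrt (by positivity)]
      calc (∑ i, ‖w i‖ ^ 2) ≤ ∑ _i : Fin n, (ε * D * Real.sqrt (1 + K ^ 2)) ^ 2 := by
            apply Finset.sum_le_sum
            intro i _
            have := key i
            have h2 : ‖w i‖ = |w i| := rfl
            rw [h2]
            exact pow_le_pow_left₀ (abs_nonneg _) this 2
        _ = n * (ε * D * Real.sqrt (1 + K ^ 2)) ^ 2 := by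
            simp [Finset.sum_const, Finset.card_univ, nsmul_eq_mul]
    have hrhs : (0:ℝ) ≤ Real.sqrt n * (ε * D * Real.sqrt (1 + K ^ 2)) := by positivity
    nlinarith [Real.sq_sqrt (show (0:ℝ) ≤ n by positivity), norm_nonneg w,
      Real.sqrt_nonneg (n:ℝ), mul_self_nonneg (‖w‖ - Real.sqrt n * (ε * D * Real.sqrt (1 + K ^ 2)))]
  calc ‖w‖ ≤ Real.sqrt n * (ε * D * Real.sqrt (1 + K ^ 2)) := hnormw
    _ = ε * Real.sqrt (n * (1 + K ^ 2)) * D := by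
        rw [Real.sqrt_mul (by positivity)]
        ring
end
end

section
/- Let B be a symmetric positive semidefinite n×n matrix with ‖B‖ ≤ 1 (spectral norm). Then I − B is also symmetric positive semidefinite, and the subspace L = rge(B, I−B) := {(Bu, (I−B)u) : u ∈ R^n} satisfies L = L*, where L* := {(−v*, u*) : (u*, v*) ∈ L^⊥}. -/
noncomputable section

open Matrix RealInnerProductSpace

lemma inner_pairMk {n : ℕ} (x y u v : Evec n) :
    ⟪pairMk x y, pairMk u v⟫ = ⟪x, u⟫ + ⟪y, v⟫ := by
  simp [pairMk, WithLp.prod_inner_apply]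

lemma inner_eq_dot {n : ℕ} (x y : Evec n) : ⟪x, y⟫ = x ⬝ᵥ y := by
  simp [inner, dotProduct, mul_comm]

lemma dot_symm_mulVec {n : ℕ} {A : Matrix (Fin n) (Fin n) ℝ} (hA : Aᵀ = A)
    (x w : Fin n → ℝ) : A.mulVec w ⬝ᵥ x = w ⬝ᵥ A.mulVec x := by
  rw [Matrix.dotProduct_mulVec, ← Matrix.mulVec_transpose, hA]

/-- If `B` is symmetric positive semidefinite with `‖B‖ ≤ 1` (spectral
norm), then `I − B` is symmetric positive semidefinite, and the subspace
`L = rge(B, I−B) = {(Bu, (I−B)u)}` satisfies `L = L*`, where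
`L* = {(−v*, u*) : (u*, v*) ∈ L^⊥}` (here the submodule `Ls` characterized by `hLs`). -/
theorem stmt16 (n : ℕ) (B : Matrix (Fin n) (Fin n) ℝ)
    (hB : B.PosSemidef) (hBnorm : ‖Matrix.toEuclideanCLM (𝕜 := ℝ) B‖ ≤ 1)
    (L : Submodule ℝ (Vec2 n))
    (hL : (L : Set (Vec2 n)) =
      {z | ∃ u : Evec n, z = pairMk (WithLp.toLp 2 (B.mulVec u)) (WithLp.toLp 2 ((1 - B).mulVec u))})
    (Ls : Submodule ℝ (Vec2 n))
    (hLs : (Ls : Set (Vec2 n)) =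
      {z | ∃ u v : Evec n, pairMk u v ∈ Lᗮ ∧ z = pairMk (-v) u}) :
    (1 - B).PosSemidef ∧ Ls = L := by
  have hBsymm : Bᵀ = B := hB.1
  have hB1symm : (1 - B)ᵀ = 1 - B := by
    rw [Matrix.transpose_sub, Matrix.transpose_one, hBsymm]
  constructor
  · rw [Matrix.posSemidef_iff_dotProduct_mulVec]; constructor
    · exact hB1symm
    · intro x
      have hx : star x = x := rfl
      have key : x ⬝ᵥ B.mulVec x ≤ x ⬝ᵥ x := by
        set x' : Evec n := (EuclideanSpace.equiv (Fin n) ℝ).symm x with hx'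
        have h1 : x ⬝ᵥ B.mulVec x = ⟪x', Matrix.toEuclideanCLM (𝕜 := ℝ) B x'⟫ := by
          rw [inner_eq_dot]; rfl
        have h2 : x ⬝ᵥ x = ‖x'‖ ^ 2 := by
          rw [← real_inner_self_eq_norm_sq, inner_eq_dot]; rfl
        rw [h1, h2]
        calc ⟪x', Matrix.toEuclideanCLM (𝕜 := ℝ) B x'⟫
            ≤ ‖x'‖ * ‖Matrix.toEuclideanCLM (𝕜 := ℝ) B x'‖ := real_inner_le_norm _ _
          _ ≤ ‖x'‖ * (‖Matrix.toEuclideanCLM (𝕜 := ℝ) B‖ * ‖x'‖) := by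
              gcongr; exact (Matrix.toEuclideanCLM (𝕜 := ℝ) B).le_opNorm x'
          _ ≤ ‖x'‖ * (1 * ‖x'‖) := by gcongr
          _ = ‖x'‖ ^ 2 := by ring
      rw [hx]
      have h3 : (1 - B).mulVec x = x - B.mulVec x := by
        rw [Matrix.sub_mulVec, Matrix.one_mulVec]
      rw [h3, dotProduct_sub]
      linarith
  · have hperp : ∀ x y : Evec n, pairMk x y ∈ Lᗮ ↔
        B.mulVec x + (1 - B).mulVec y = 0 := by
      intro x y
      rw [Submodule.mem_orthogonal]
      constructor
      · intro h
        set c : Fin n → ℝ := B.mulVec x + (1 - B).mulVec y with hc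
        have hcL : pairMk (WithLp.toLp 2 (B.mulVec c)) (WithLp.toLp 2 ((1 - B).mulVec c)) ∈ L := by
          rw [← SetLike.mem_coe, hL]; exact ⟨WithLp.toLp 2 c, rfl⟩
        have h0 := h _ hcL
        rw [inner_pairMk, inner_eq_dot, inner_eq_dot] at h0
        simp only [WithLp.ofLp_toLp] at h0
        rw [dot_symm_mulVec hBsymm,
          dot_symm_mulVec hB1symm, ← dotProduct_add] at h0
        exact dotProduct_self_eq_zero.mp h0
      · intro h z hz
        rw [← SetLike.mem_coe, hL] at hz
        obtain ⟨w, rfl⟩ := hz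
        rw [inner_pairMk, inner_eq_dot, inner_eq_dot]
        simp only [WithLp.ofLp_toLp]
        rw [dot_symm_mulVec hBsymm,
          dot_symm_mulVec hB1symm, ← dotProduct_add, h, dotProduct_zero]
    ext z
    rw [← SetLike.mem_coe, ← SetLike.mem_coe, hLs, hL]
    constructor
    · rintro ⟨x, y, hp, rfl⟩
      rw [hperp] at hp
      refine ⟨x - y, ?_⟩
      rw [WithLp.ofLp_sub]
      set X : Fin n → ℝ := x.ofLp with hX
      set Y : Fin n → ℝ := y.ofLp with hY
      have hp' : B.mulVec X + (1 - B).mulVec Y = 0 := hp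
      have h1 : (1 - B).mulVec Y = Y - B.mulVec Y := by
        rw [Matrix.sub_mulVec, Matrix.one_mulVec]
      rw [h1] at hp'
      have e0 : B.mulVec X = B.mulVec Y - Y := by
        have h2 := eq_neg_of_add_eq_zero_left hp'
        rw [h2]; abel
      have e1 : B.mulVec (X - Y) = -Y := by
        rw [Matrix.mulVec_sub, e0]; abel
      have e2 : (1 - B).mulVec (X - Y) = X := by
        rw [Matrix.sub_mulVec, Matrix.one_mulVec, e1]; abel
      rw [e1, e2]; simp [hX, hY]
    · rintro ⟨u, rfl⟩
      refine ⟨WithLp.toLp 2 ((1 - B).mulVec u), WithLp.toLp 2 (-(B.mulVec u)), ?_, by simp⟩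
      rw [hperp, WithLp.ofLp_toLp, WithLp.ofLp_toLp, Matrix.mulVec_neg, Matrix.mulVec_mulVec, Matrix.mulVec_mulVec]
      have hcomm : B * (1 - B) = (1 - B) * B := by
        rw [mul_one_sub, one_sub_mul]
      rw [hcomm]; abel
end
end
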